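/- For every integer n ≥ 6 and every real x with 3 ≤ x ≤ n/2, we have n · sin(πx/n)/sin(π/n) ≥ x(n−x) + 1. -/

import Mathlib

open Real

lemma sub_cube_le_sin {t : ℝ} (ht : 0 ≤ t) : t - t ^ 3 / 6 ≤ Real.sin t := by
  have key : ∀ s : ℝ, 0 ≤ s → 0 ≤ Real.sin s - s + s ^ 3 / 6 := by
    intro s hs
    have hmono : MonotoneOn (fun u : ℝ => Real.sin u - u + u ^ 3 / 6) (Set.Ici 0) := by
      apply monotoneOn_of_deriv_nonneg (convex_Ici 0)
      · exact (Real.continuous_sin.sub continuous_id).add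
          ((continuous_pow 3).div_const 6) |>.continuousOn
      · intro u hu
        exact ((Real.differentiable_sin.sub differentiable_id).add
          ((differentiable_pow 3).div_const 6)).differentiableAt.differentiableWithinAt
      · intro u hu
        have hd : HasDerivAt (fun v : ℝ => Real.sin v - v + v ^ 3 / 6)
            (Real.cos u - 1 + 3 * u ^ (3 - 1) * 1 / 6) u := by
          exact ((Real.hasDerivAt_sin u).sub (hasDerivAt_id u)).add
            (((hasDerivAt_id u).pow 3).div_const 6)
        rw [hd.deriv]
        have := Real.one_sub_sq_div_two_le_cos (x := u)
        nlinarith [this]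
    have h0 : (0:ℝ) ∈ Set.Ici (0:ℝ) := Set.mem_Ici.mpr le_rfl
    have := hmono h0 (Set.mem_Ici.mpr hs) hs
    simpa using this
  have := key t ht
  linarith

theorem stmt_3 (n : ℕ) (hn : 6 ≤ n) (x : ℝ) (hx3 : 3 ≤ x) (hxn : x ≤ n / 2) :
    (n : ℝ) * Real.sin (π * x / n) / Real.sin (π / n) ≥ x * (n - x) + 1 := by
  have hn0 : (0:ℝ) < n := by positivity
  have hn6 : (6:ℝ) ≤ n := by exact_mod_cast hn
  have hπ0 : 0 < π := Real.pi_pos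
  have hθpos : 0 < π / n := by positivity
  have hθlt : π / n < π := by
    rw [div_lt_iff₀ hn0]; nlinarith
  have hsinθpos : 0 < Real.sin (π / n) := Real.sin_pos_of_pos_of_lt_pi hθpos hθlt
  have hsinθle : Real.sin (π / n) ≤ π / n := (Real.sin_lt hθpos).le
  set a : ℝ := π * x / n with ha_def
  have ha0 : 0 ≤ a := by positivity
  have haπ : a ≤ π / 2 := by
    rw [ha_def, div_le_iff₀ hn0]
    nlinarith
  have hsina : 0 ≤ Real.sin a :=
    Real.sin_nonneg_of_nonneg_of_le_pi ha0 (by linarith)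
  have h1 : (n : ℝ) * Real.sin a / (π / n) ≤ (n : ℝ) * Real.sin a / Real.sin (π / n) := by
    gcongr
  have h2 : (n : ℝ) * (a - a ^ 3 / 6) / (π / n) ≤ (n : ℝ) * Real.sin a / (π / n) := by
    gcongr
    exact sub_cube_le_sin ha0
  have heq : (n : ℝ) * (a - a ^ 3 / 6) / (π / n) = n * x - π ^ 2 * x ^ 3 / (6 * n) := by
    rw [ha_def]
    field_simp
  have hπ2 : π ^ 2 < 9.9225 := by
    nlinarith [Real.pi_lt_d2, Real.pi_pos]
  have hfinal : x * (n - x) + 1 ≤ n * x - π ^ 2 * x ^ 3 / (6 * n) := by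
    have h : π ^ 2 * x ^ 3 / (6 * n) ≤ x ^ 2 - 1 := by
      rw [div_le_iff₀ (by positivity)]
      nlinarith [mul_nonneg (show (0:ℝ) ≤ n - 2*x by linarith)
          (show (0:ℝ) ≤ x^2 - 1 by nlinarith),
        mul_nonneg (show (0:ℝ) ≤ x by linarith) (show (0:ℝ) ≤ x^2 - 9 by nlinarith),
        mul_nonneg (show (0:ℝ) ≤ x^3 by positivity) (show (0:ℝ) ≤ 9.9225 - π^2 by linarith)]
    nlinarith [h]
  calc x * (n - x) + 1 ≤ n * x - π ^ 2 * x ^ 3 / (6 * n) := hfinal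
    _ = (n : ℝ) * (a - a ^ 3 / 6) / (π / n) := heq.symm
    _ ≤ (n : ℝ) * Real.sin a / (π / n) := h2
    _ ≤ (n : ℝ) * Real.sin a / Real.sin (π / n) := h1
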